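/- arXiv:1902.03622 — 3 statements merged into one kernel-verified Lean document; each statement's English description precedes it below -/
import Mathlib

section
/- Let m ≥ 1 and let f be an elliptical density on ℝ^m (with arbitrary location μ, positive definite scatter matrix V and density generator φ) such that all moments of f are finite and f is positive on a nonempty open subset of ℝ^m. Then the subspaces Π_k, k ≥ 0, are pairwise orthogonal with respect to the inner product ⟨p,q⟩_f = ∫_{ℝ^m} p(x)q(x)f(x)dx, and for every k ≥ 0 the space P_k of polynomials of total degree at most k decomposes as the internal direct sum P_k = Π_0 ⊕ Π_1 ⊕ ⋯ ⊕ Π_k. -/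
open MeasureTheory Matrix Finset

noncomputable section

/-- Normalizing constant `c_m` of the elliptical density with generator `φ`. -/
def cm (m : ℕ) (φ : ℝ → ℝ) : ℝ :=
  Real.Gamma ((m : ℝ) / 2) /
    (Real.pi ^ ((m : ℝ) / 2) * ∫ y in Set.Ioi (0 : ℝ), y ^ ((m : ℝ) / 2 - 1) * φ y)

/-- The elliptical density with location `μ`, scatter matrix `V` and generator `φ`. -/
def ellDensity (m : ℕ) (φ : ℝ → ℝ) (μ : Fin m → ℝ) (V : Matrix (Fin m) (Fin m) ℝ)
    (x : Fin m → ℝ) : ℝ :=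
  cm m φ * Real.sqrt (V⁻¹).det *
    φ (dotProduct (x - μ) ((V⁻¹).mulVec (x - μ)))

/-- `f` is an elliptical density (arbitrary location, positive definite scatter,
density generator), has all moments finite, and is positive on a nonempty open set. -/
def IsNiceElliptical (m : ℕ) (f : (Fin m → ℝ) → ℝ) : Prop :=
  (∃ (μ : Fin m → ℝ) (V : Matrix (Fin m) (Fin m) ℝ) (φ : ℝ → ℝ),
      V.PosDef ∧ Measurable φ ∧ (∀ y, 0 ≤ φ y) ∧
      IntegrableOn (fun y => y ^ ((m : ℝ) / 2 - 1) * φ y) (Set.Ioi 0) ∧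
      (0 < ∫ y in Set.Ioi (0 : ℝ), y ^ ((m : ℝ) / 2 - 1) * φ y) ∧
      f = ellDensity m φ μ V) ∧
    (∀ N : ℕ, Integrable fun x : Fin m → ℝ => ‖x‖ ^ N * f x) ∧
    ∃ U : Set (Fin m → ℝ), IsOpen U ∧ U.Nonempty ∧ ∀ x ∈ U, 0 < f x

/-- `P_k`: the set of functions on `ℝ^m` given by polynomials of total degree at most `k`. -/
def PkSet (m k : ℕ) : Set ((Fin m → ℝ) → ℝ) :=
  {g | ∃ p : MvPolynomial (Fin m) ℝ, p.totalDegree ≤ k ∧ ∀ x, g x = MvPolynomial.eval x p}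

/-- The affine-linear transformation `γ(x) = A (x + b)`. -/
def affMap (m : ℕ) (A : Matrix (Fin m) (Fin m) ℝ) (b : Fin m → ℝ) (x : Fin m → ℝ) :
    Fin m → ℝ :=
  A.mulVec (x + b)

/-- The subspaces `Π_k`, defined recursively: `Π_0 = P_0` and, for `k ≥ 1`, `Π_k` is the
set of `p ∈ P_k` such that `∫ p(x) q(γ(x)) f(x) dx = 0` for every `q ∈ Π_{k'}` with
`k' < k` and every affine-linear `γ ∈ AL(m)`. -/
def PiK (m : ℕ) (f : (Fin m → ℝ) → ℝ) : ℕ → Set ((Fin m → ℝ) → ℝ)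
  | 0 => PkSet m 0
  | k + 1 =>
      {p | p ∈ PkSet m (k + 1) ∧
        ∀ k' : ℕ, k' < k + 1 → ∀ q ∈ PiK m f k',
          ∀ A : Matrix (Fin m) (Fin m) ℝ, IsUnit A.det → ∀ b : Fin m → ℝ,
            (∫ x, p x * q (affMap m A b x) * f x) = 0}
  termination_by k => k
  decreasing_by omega

open MvPolynomial

lemma eval_aeval_poly {σ τ : Type*} (x : τ → ℝ) (g : σ → MvPolynomial τ ℝ)
    (p : MvPolynomial σ ℝ) :
    eval x (aeval g p) = eval (fun i => eval x (g i)) p := by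
  induction p using MvPolynomial.induction_on with
  | C a => simp [MvPolynomial.algebraMap_eq]
  | add p q hp hq => rw [_root_.map_add, _root_.map_add, hp, hq, _root_.map_add]
  | mul_X p i hp => rw [_root_.map_mul, _root_.map_mul, aeval_X, hp, _root_.map_mul, eval_X]

lemma totalDegree_aeval_le {σ τ : Type*} (g : σ → MvPolynomial τ ℝ)
    (hg : ∀ i, (g i).totalDegree ≤ 1) (p : MvPolynomial σ ℝ) :
    (aeval g p).totalDegree ≤ p.totalDegree := by
  conv_lhs => rw [p.as_sum]
  rw [map_sum]
  refine (totalDegree_finset_sum _ _).trans (Finset.sup_le fun s hs => ?_)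
  rw [aeval_monomial]
  refine (totalDegree_mul _ _).trans ?_
  have h1 : (algebraMap ℝ (MvPolynomial τ ℝ) (coeff s p)).totalDegree = 0 := by
    rw [MvPolynomial.algebraMap_eq]; exact totalDegree_C _
  rw [h1, zero_add]
  refine le_trans ?_ (le_totalDegree hs)
  rw [Finsupp.prod]
  refine (totalDegree_finset_prod _ _).trans ?_
  rw [Finsupp.sum]
  refine Finset.sum_le_sum fun i _ => ?_
  calc (g i ^ s i).totalDegree ≤ s i * (g i).totalDegree := totalDegree_pow _ _
    _ ≤ s i * 1 := Nat.mul_le_mul_left _ (hg i)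
    _ = s i := Nat.mul_one _

lemma polyEval_aeval {σ : Type*} (t : ℝ) (g : σ → Polynomial ℝ) (p : MvPolynomial σ ℝ) :
    Polynomial.eval t (aeval g p) = eval (fun i => Polynomial.eval t (g i)) p := by
  induction p using MvPolynomial.induction_on with
  | C a => simp [MvPolynomial.algebraMap_eq]
  | add p q hp hq => rw [_root_.map_add, Polynomial.eval_add, hp, hq, _root_.map_add]
  | mul_X p i hp => rw [_root_.map_mul, aeval_X, Polynomial.eval_mul, hp, _root_.map_mul, eval_X]

/-- A multivariate real polynomial vanishing on a ball is zero. -/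

lemma mvpoly_eq_zero_of_ball {m : ℕ} {c : Fin m → ℝ} {r : ℝ} (hr : 0 < r)
    (P : MvPolynomial (Fin m) ℝ)
    (h : ∀ x ∈ Metric.ball c r, eval x P = 0) : P = 0 := by
  apply MvPolynomial.funext (q := 0)
  intro y
  set q : Polynomial ℝ :=
    aeval (fun i => Polynomial.C (c i) + Polynomial.C (y i - c i) * Polynomial.X) P with hq
  have key : ∀ t : ℝ, Polynomial.eval t q = eval (fun i => c i + (y i - c i) * t) P := by
    intro t
    rw [hq, polyEval_aeval]
    simp
  have hδ : 0 < r / (‖y - c‖ + 1) := div_pos hr (by positivity)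
  have hroots : Set.Ioo (-(r / (‖y - c‖ + 1))) (r / (‖y - c‖ + 1)) ⊆ {t | q.IsRoot t} := by
    intro t ht
    have habs : |t| < r / (‖y - c‖ + 1) := abs_lt.2 ⟨ht.1, ht.2⟩
    have hmem : (fun i => c i + (y i - c i) * t) ∈ Metric.ball c r := by
      rw [Metric.mem_ball, dist_eq_norm]
      have : (fun i => c i + (y i - c i) * t) - c = t • (y - c) := by
        funext i; simp [Pi.smul_apply, smul_eq_mul]; ring
      rw [this, norm_smul]
      calc ‖t‖ * ‖y - c‖ ≤ ‖t‖ * (‖y - c‖ + 1) := by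
            exact mul_le_mul_of_nonneg_left (by linarith [norm_nonneg (y - c)]) (norm_nonneg t)
        _ < r := by
            rw [Real.norm_eq_abs]
            calc |t| * (‖y - c‖ + 1) < r / (‖y - c‖ + 1) * (‖y - c‖ + 1) := by
                  exact mul_lt_mul_of_pos_right habs (by positivity)
              _ = r := div_mul_cancel₀ _ (by positivity)
      
    show Polynomial.eval t q = 0
    rw [key]; exact h _ hmem
  have hq0 : q = 0 := by
    apply Polynomial.eq_zero_of_infinite_isRoot
    exact Set.Infinite.mono hroots (Set.Ioo_infinite (by linarith))
  have h1 := key 1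
  rw [hq0] at h1
  simp only [Polynomial.eval_zero] at h1
  rw [map_zero]
  have : (fun i => c i + (y i - c i) * 1) = y := by funext i; ring
  rw [this] at h1
  exact h1.symm

variable {m : ℕ} {f : (Fin m → ℝ) → ℝ}

lemma nice_meas (hf : IsNiceElliptical m f) : Measurable f := by
  obtain ⟨⟨μ, V, φ, hV, hφm, hφnn, hint, hpos, rfl⟩, _, _⟩ := hf
  have hcont : Continuous fun x : Fin m → ℝ =>
      dotProduct (x - μ) ((V⁻¹).mulVec (x - μ)) := by
    simp only [dotProduct, Matrix.mulVec]
    refine continuous_finset_sum _ fun i _ => Continuous.mul ?_ ?_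
    · exact Continuous.sub (continuous_apply i) continuous_const
    · exact continuous_finset_sum _ fun j _ => Continuous.mul continuous_const
        (Continuous.sub (continuous_apply j) continuous_const)
  exact (measurable_const.mul (hφm.comp hcont.measurable))

lemma nice_nonneg (hf : IsNiceElliptical m f) : ∀ x, 0 ≤ f x := by
  obtain ⟨⟨μ, V, φ, hV, hφm, hφnn, hint, hpos, rfl⟩, _, _⟩ := hf
  intro x
  refine mul_nonneg (mul_nonneg ?_ (Real.sqrt_nonneg _)) (hφnn _)
  exact div_nonneg (Real.Gamma_nonneg_of_nonneg (by positivity))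
    (mul_nonneg (Real.rpow_nonneg Real.pi_pos.le _) hpos.le)

lemma eval_abs_le (P : MvPolynomial (Fin m) ℝ) (x : Fin m → ℝ) :
    |eval x P| ≤ (∑ s ∈ P.support, |coeff s P|) * (1 + ‖x‖) ^ P.totalDegree := by
  rw [eval_eq, Finset.sum_mul]
  refine (Finset.abs_sum_le_sum_abs _ _).trans (Finset.sum_le_sum fun s hs => ?_)
  rw [abs_mul]
  refine mul_le_mul_of_nonneg_left ?_ (abs_nonneg _)
  rw [abs_prod]
  have h1 : ∀ i ∈ s.support, |x i ^ s i| ≤ (1 + ‖x‖) ^ s i := by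
    intro i _
    rw [abs_pow]
    refine pow_le_pow_left₀ (abs_nonneg _) ?_ _
    calc |x i| ≤ ‖x‖ := by simpa using norm_le_pi_norm x i
      _ ≤ 1 + ‖x‖ := by linarith
  calc ∏ i ∈ s.support, |x i ^ s i| ≤ ∏ i ∈ s.support, (1 + ‖x‖) ^ s i :=
        Finset.prod_le_prod (fun i _ => abs_nonneg _) h1
    _ = (1 + ‖x‖) ^ (∑ i ∈ s.support, s i) := by rw [Finset.prod_pow_eq_pow_sum]
    _ ≤ (1 + ‖x‖) ^ P.totalDegree := by
        refine pow_le_pow_right₀ (by linarith [norm_nonneg x]) ?_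
        exact le_totalDegree hs

lemma one_add_pow_le (a : ℝ) (ha : 0 ≤ a) (N : ℕ) :
    (1 + a) ^ N ≤ 2 ^ N * (1 + a ^ N) := by
  have h1 : (1 + a) ^ N ≤ (2 * max 1 a) ^ N := by
    refine pow_le_pow_left₀ (by positivity) ?_ _
    rcases le_total a 1 with h | h
    · calc 1 + a ≤ 2 := by linarith
        _ ≤ 2 * max 1 a := by nlinarith [le_max_left 1 a]
    · calc 1 + a ≤ 2 * a := by linarith
        _ ≤ 2 * max 1 a := by nlinarith [le_max_right 1 a]
  rw [mul_pow] at h1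
  refine h1.trans (mul_le_mul_of_nonneg_left ?_ (by positivity))
  rcases le_total a 1 with h | h
  · rw [max_eq_left h]
    simpa using pow_nonneg ha N
  · rw [max_eq_right h]
    linarith

lemma integrable_eval_mul (hf : IsNiceElliptical m f) (P : MvPolynomial (Fin m) ℝ) :
    Integrable (fun x => eval x P * f x) := by
  have hmeas := nice_meas hf
  have hnn := nice_nonneg hf
  obtain ⟨_, hmom, _⟩ := hf
  set C := ∑ s ∈ P.support, |coeff s P| with hC
  have hC0 : 0 ≤ C := Finset.sum_nonneg fun _ _ => abs_nonneg _
  set N := P.totalDegree with hN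
  have hdom : Integrable (fun x : Fin m → ℝ =>
      C * 2 ^ N * (‖x‖ ^ 0 * f x + ‖x‖ ^ N * f x)) :=
    ((hmom 0).add (hmom N)).const_mul _
  refine Integrable.mono' hdom ?_ (Filter.Eventually.of_forall fun x => ?_)
  · exact ((MvPolynomial.continuous_eval P).measurable.mul hmeas).aestronglyMeasurable
  · rw [Real.norm_eq_abs, abs_mul, abs_of_nonneg (hnn x)]
    calc |eval x P| * f x ≤ C * (1 + ‖x‖) ^ N * f x :=
          mul_le_mul_of_nonneg_right (eval_abs_le P x) (hnn x)
      _ ≤ C * (2 ^ N * (1 + ‖x‖ ^ N)) * f x := by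
          refine mul_le_mul_of_nonneg_right
            (mul_le_mul_of_nonneg_left (one_add_pow_le _ (norm_nonneg x) N) hC0) (hnn x)
      _ = C * 2 ^ N * (‖x‖ ^ 0 * f x + ‖x‖ ^ N * f x) := by
          simp only [pow_zero, one_mul]; ring

lemma integrable_eval2 (hf : IsNiceElliptical m f) (P Q : MvPolynomial (Fin m) ℝ) :
    Integrable (fun x => eval x P * eval x Q * f x) := by
  have := integrable_eval_mul hf (P * Q)
  simpa only [_root_.map_mul] using this

lemma posdef_BI (hf : IsNiceElliptical m f) (P : MvPolynomial (Fin m) ℝ)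
    (h : (∫ x, eval x P * eval x P * f x) = 0) : P = 0 := by
  have hmeas := nice_meas hf
  have hnn := nice_nonneg hf
  have hint := integrable_eval2 hf P P
  obtain ⟨_, _, U, hUopen, hUne, hUpos⟩ := hf
  have hae : (fun x => eval x P * eval x P * f x) =ᵐ[volume] 0 :=
    (integral_eq_zero_iff_of_nonneg_ae
      (Filter.Eventually.of_forall fun x => mul_nonneg (mul_self_nonneg _) (hnn x)) hint).mp h
  -- on U, f > 0, so eval P = 0 a.e. on U
  have haeU : (fun x => eval x P) =ᵐ[volume.restrict U] 0 := by
    have := ae_restrict_of_ae (μ := volume) (s := U) hae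
    filter_upwards [this, ae_restrict_mem hUopen.measurableSet] with x hx hxU
    have hfx := hUpos x hxU
    simp only [Pi.zero_apply] at hx ⊢
    have h2 : eval x P * eval x P = 0 := by
      rcases mul_eq_zero.mp hx with h' | h'
      · exact h'
      · exact absurd h' (ne_of_gt hfx)
    exact mul_self_eq_zero.mp h2
  have hEqOn : Set.EqOn (fun x => eval x P) 0 U :=
    MeasureTheory.Measure.eqOn_open_of_ae_eq haeU hUopen
      (MvPolynomial.continuous_eval P).continuousOn continuousOn_const
  obtain ⟨c, hc⟩ := hUne
  obtain ⟨r, hr, hball⟩ := Metric.isOpen_iff.mp hUopen c hc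
  exact mvpoly_eq_zero_of_ball hr P fun x hx => hEqOn (hball hx)

def BI {m : ℕ} (f : (Fin m → ℝ) → ℝ) (P Q : MvPolynomial (Fin m) ℝ) : ℝ :=
  ∫ x, eval x P * eval x Q * f x

lemma BI_symm (P Q : MvPolynomial (Fin m) ℝ) : BI f P Q = BI f Q P := by
  unfold BI
  exact congrArg _ (funext fun x => by ring)

lemma BI_add_left (hf : IsNiceElliptical m f) (P Q R : MvPolynomial (Fin m) ℝ) :
    BI f (P + Q) R = BI f P R + BI f Q R := by
  unfold BI
  rw [show (fun x => eval x (P + Q) * eval x R * f x) =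
      fun x => eval x P * eval x R * f x + eval x Q * eval x R * f x from
    funext fun x => by rw [_root_.map_add]; ring]
  exact integral_add (integrable_eval2 hf P R) (integrable_eval2 hf Q R)

lemma BI_smul_left (c : ℝ) (P R : MvPolynomial (Fin m) ℝ) :
    BI f (c • P) R = c * BI f P R := by
  unfold BI
  rw [show (fun x => eval x (c • P) * eval x R * f x) =
      fun x => c * (eval x P * eval x R * f x) from
    funext fun x => by rw [MvPolynomial.smul_eval]; ring]
  exact MeasureTheory.integral_const_mul _ _

lemma BI_sub_left (hf : IsNiceElliptical m f) (P Q R : MvPolynomial (Fin m) ℝ) :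
    BI f (P - Q) R = BI f P R - BI f Q R := by
  have h := BI_add_left hf (P - Q) Q R
  rw [sub_add_cancel] at h
  linarith

lemma BI_sum_right (hf : IsNiceElliptical m f) (P : MvPolynomial (Fin m) ℝ)
    {ι : Type*} (s : Finset ι) (G : ι → MvPolynomial (Fin m) ℝ) :
    BI f P (∑ j ∈ s, G j) = ∑ j ∈ s, BI f P (G j) := by
  unfold BI
  rw [show (fun x => eval x P * eval x (∑ j ∈ s, G j) * f x) =
      fun x => ∑ j ∈ s, eval x P * eval x (G j) * f x from
    funext fun x => by rw [_root_.map_sum, Finset.mul_sum, Finset.sum_mul]]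
  exact integral_finset_sum s fun j _ => integrable_eval2 hf P (G j)

lemma BI_zero_right (P : MvPolynomial (Fin m) ℝ) : BI f P 0 = 0 := by
  unfold BI
  simp

/-- Orthogonal projection onto polynomials of degree at most `k`. -/

lemma projection (hf : IsNiceElliptical m f) (k : ℕ) (P : MvPolynomial (Fin m) ℝ) :
    ∃ Q : MvPolynomial (Fin m) ℝ, Q.totalDegree ≤ k ∧
      ∀ R : MvPolynomial (Fin m) ℝ, R.totalDegree ≤ k → BI f (P - Q) R = 0 := by
  set W := MvPolynomial.restrictTotalDegree (Fin m) ℝ k with hW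
  have hadd_r : ∀ (P' : MvPolynomial (Fin m) ℝ) (r s : MvPolynomial (Fin m) ℝ),
      BI f P' (r + s) = BI f P' r + BI f P' s := fun P' r s => by
    rw [BI_symm, BI_add_left hf, BI_symm (f := f) r, BI_symm (f := f) s]
  have hsmul_r : ∀ (P' : MvPolynomial (Fin m) ℝ) (c : ℝ) (r : MvPolynomial (Fin m) ℝ),
      BI f P' (c • r) = c * BI f P' r := fun P' c r => by
    rw [BI_symm, BI_smul_left, BI_symm (f := f) r]
  let T : W →ₗ[ℝ] Module.Dual ℝ W :=
    { toFun := fun w =>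
        { toFun := fun r => BI f (w : MvPolynomial (Fin m) ℝ) (r : MvPolynomial (Fin m) ℝ)
          map_add' := fun r s => hadd_r _ _ _
          map_smul' := fun c r => hsmul_r _ _ _ }
      map_add' := fun w w' => by
        ext r
        exact BI_add_left hf _ _ _
      map_smul' := fun c w => by
        ext r
        exact BI_smul_left _ _ _ }
    
  have hinj : Function.Injective T := by
    rw [injective_iff_map_eq_zero]
    intro w hw
    have h0 : BI f (w : MvPolynomial (Fin m) ℝ) (w : MvPolynomial (Fin m) ℝ) = 0 := by
      have := LinearMap.congr_fun hw w
      exact this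
    have : (w : MvPolynomial (Fin m) ℝ) = 0 := posdef_BI hf _ h0
    exact Subtype.ext this
  have hsurj : Function.Surjective T :=
    (LinearMap.injective_iff_surjective_of_finrank_eq_finrank
      (Subspace.dual_finrank_eq).symm).mp hinj
  let φP : Module.Dual ℝ W :=
    { toFun := fun r => BI f P (r : MvPolynomial (Fin m) ℝ)
      map_add' := fun r s => hadd_r _ _ _
      map_smul' := fun c r => hsmul_r _ _ _ }
  obtain ⟨q, hq⟩ := hsurj φP
  refine ⟨(q : MvPolynomial (Fin m) ℝ),
    (MvPolynomial.mem_restrictTotalDegree _ _ _).mp q.2, fun R hR => ?_⟩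
  have hRW : R ∈ W := (MvPolynomial.mem_restrictTotalDegree _ _ _).mpr hR
  have hTq : BI f (q : MvPolynomial (Fin m) ℝ) R = BI f P R :=
    LinearMap.congr_fun hq ⟨R, hRW⟩
  rw [BI_sub_left hf, hTq, sub_self]

lemma affMap_one_zero {m : ℕ} (x : Fin m → ℝ) : affMap m 1 0 x = x := by
  simp [affMap, Matrix.one_mulVec]

def substAff {m : ℕ} (A : Matrix (Fin m) (Fin m) ℝ) (b : Fin m → ℝ)
    (Q : MvPolynomial (Fin m) ℝ) : MvPolynomial (Fin m) ℝ :=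
  aeval (fun i => ∑ j, MvPolynomial.C (A i j) * (MvPolynomial.X j + MvPolynomial.C (b j))) Q

lemma eval_substAff {m : ℕ} (A : Matrix (Fin m) (Fin m) ℝ) (b : Fin m → ℝ)
    (Q : MvPolynomial (Fin m) ℝ) (x : Fin m → ℝ) :
    eval x (substAff A b Q) = eval (affMap m A b x) Q := by
  unfold substAff
  rw [eval_aeval_poly]
  have harg : (fun i => eval x (∑ j, MvPolynomial.C (A i j) *
      (MvPolynomial.X j + MvPolynomial.C (b j)))) = affMap m A b x := by
    funext i
    simp [affMap, Matrix.mulVec, dotProduct]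
  rw [harg]

lemma totalDegree_substAff_le {m : ℕ} (A : Matrix (Fin m) (Fin m) ℝ) (b : Fin m → ℝ)
    (Q : MvPolynomial (Fin m) ℝ) :
    (substAff A b Q).totalDegree ≤ Q.totalDegree := by
  refine totalDegree_aeval_le _ (fun i => ?_) Q
  refine (totalDegree_finset_sum _ _).trans (Finset.sup_le fun j _ => ?_)
  calc (MvPolynomial.C (A i j) * (MvPolynomial.X j + MvPolynomial.C (b j))).totalDegree
      ≤ (MvPolynomial.C (A i j) : MvPolynomial (Fin m) ℝ).totalDegree
        + (MvPolynomial.X j + MvPolynomial.C (b j)).totalDegree := totalDegree_mul _ _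
    _ ≤ 0 + max (MvPolynomial.X (R := ℝ) j).totalDegree
        (MvPolynomial.C (σ := Fin m) (b j)).totalDegree :=
        add_le_add (le_of_eq (totalDegree_C _)) (totalDegree_add _ _)
    _ ≤ 1 := by simp [totalDegree_X, totalDegree_C]

def Orth {m : ℕ} (f : (Fin m → ℝ) → ℝ) (k : ℕ) (P : MvPolynomial (Fin m) ℝ) : Prop :=
  ∀ R : MvPolynomial (Fin m) ℝ, R.totalDegree < k → BI f P R = 0

lemma mainInduction (hf : IsNiceElliptical m f) : ∀ k : ℕ,
    (∀ p, p ∈ PiK m f k ↔ ∃ P : MvPolynomial (Fin m) ℝ,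
      P.totalDegree ≤ k ∧ (∀ x, p x = eval x P) ∧ Orth f k P) ∧
    (∀ P : MvPolynomial (Fin m) ℝ, P.totalDegree ≤ k →
      ∃ G : ℕ → MvPolynomial (Fin m) ℝ,
        (∀ j, j ≤ k → (G j).totalDegree ≤ j ∧ Orth f j (G j)) ∧
        P = ∑ j ∈ Finset.range (k + 1), G j) := by
  intro k
  induction k using Nat.strong_induction_on with
  | _ k ih =>
  constructor
  · -- characterization of `PiK`
    match k with
    | 0 =>
      intro p
      rw [PiK]
      constructor
      · rintro ⟨P, hdeg, hpe⟩
        exact ⟨P, hdeg, hpe, fun R hR => absurd hR (Nat.not_lt_zero _)⟩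
      · rintro ⟨P, hdeg, hpe, _⟩
        exact ⟨P, hdeg, hpe⟩
    | k + 1 =>
      intro p
      rw [PiK]
      constructor
      · rintro ⟨⟨P, hdeg, hpe⟩, hcond⟩
        refine ⟨P, hdeg, hpe, fun R hR => ?_⟩
        have hRk : R.totalDegree ≤ k := Nat.lt_succ_iff.mp hR
        obtain ⟨G, hG, hsum⟩ := (ih k (Nat.lt_succ_self k)).2 R hRk
        rw [hsum, BI_sum_right hf]
        refine Finset.sum_eq_zero fun j hj => ?_
        have hjk : j ≤ k := Nat.lt_succ_iff.mp (Finset.mem_range.mp hj)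
        have hmem : (fun x => eval x (G j)) ∈ PiK m f j :=
          ((ih j (by omega)).1 _).mpr ⟨G j, (hG j hjk).1, fun x => rfl, (hG j hjk).2⟩
        have h0 := hcond j (by omega) _ hmem 1 (by simp) 0
        have heq : (fun x => p x * (fun y => eval y (G j)) (affMap m 1 0 x) * f x) =
            fun x => eval x P * eval x (G j) * f x :=
          funext fun x => by simp only [affMap_one_zero, ← hpe x]
        rw [heq] at h0
        exact h0
      · rintro ⟨P, hdeg, hpe, horth⟩
        refine ⟨⟨P, hdeg, hpe⟩, ?_⟩
        intro k' hk' q hq A hA b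
        obtain ⟨Q, hQdeg, hqe, _⟩ := ((ih k' (by omega)).1 q).mp hq
        have heq : (fun x => p x * q (affMap m A b x) * f x) =
            fun x => eval x P * eval x (substAff A b Q) * f x :=
          funext fun x => by rw [hpe x, hqe _, eval_substAff]
        rw [heq]
        exact horth _ (lt_of_le_of_lt ((totalDegree_substAff_le A b Q).trans hQdeg)
          (by omega))
  · -- decomposition
    match k with
    | 0 =>
      intro P hdeg
      refine ⟨fun j => if j = 0 then P else 0, fun j hj => ?_, by simp⟩
      interval_cases j
      exact ⟨by simpa using hdeg, fun R hR => absurd hR (Nat.not_lt_zero _)⟩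
    | k + 1 =>
      intro P hdeg
      obtain ⟨Q, hQdeg, hQorth⟩ := projection hf k P
      obtain ⟨G', hG', hQsum⟩ := (ih k (Nat.lt_succ_self k)).2 Q hQdeg
      refine ⟨fun j => if j = k + 1 then P - Q else G' j, fun j hj => ?_, ?_⟩
      · by_cases hjk : j = k + 1
        · subst hjk
          simp only [if_pos rfl]
          constructor
          · exact (totalDegree_sub _ _).trans (max_le hdeg (hQdeg.trans (Nat.le_succ k)))
          · intro R hR
            exact hQorth R (Nat.lt_succ_iff.mp hR)
        · simp only [if_neg hjk]
          exact hG' j (by omega)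
      · rw [Finset.sum_range_succ, if_pos rfl,
          Finset.sum_congr rfl (fun j hj => if_neg (by
            have := Finset.mem_range.mp hj; omega)), ← hQsum]
        ring

/-- The subspaces `Π_k` are pairwise orthogonal with respect to
`⟨p,q⟩_f = ∫ p q f`, and `P_k` decomposes as the internal direct sum
`P_k = Π_0 ⊕ Π_1 ⊕ ⋯ ⊕ Π_k`. -/
theorem statement0 (m : ℕ) (hm : 1 ≤ m) (f : (Fin m → ℝ) → ℝ)
    (hf : IsNiceElliptical m f) :
    (∀ k k' : ℕ, k ≠ k' → ∀ p ∈ PiK m f k, ∀ q ∈ PiK m f k',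
      (∫ x, p x * q x * f x) = 0) ∧
    (∀ k : ℕ, ∀ p ∈ PkSet m k,
      ∃ g : ℕ → ((Fin m → ℝ) → ℝ),
        (∀ j, j ≤ k → g j ∈ PiK m f j) ∧
        (∀ x, p x = ∑ j ∈ Finset.range (k + 1), g j x) ∧
        ∀ g' : ℕ → ((Fin m → ℝ) → ℝ),
          (∀ j, j ≤ k → g' j ∈ PiK m f j) →
          (∀ x, p x = ∑ j ∈ Finset.range (k + 1), g' j x) →
          ∀ j, j ≤ k → g' j = g j) := by
  constructor
  · intro k k' hne p hp q hq
    rcases Nat.lt_or_ge k' k with hlt | hge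
    · obtain ⟨k'', rfl⟩ : ∃ k'', k = k'' + 1 := ⟨k - 1, by omega⟩
      rw [PiK] at hp
      have h0 := hp.2 k' hlt q hq 1 (by simp) 0
      have heq : (fun x => p x * q (affMap m 1 0 x) * f x) =
          fun x => p x * q x * f x := funext fun x => by rw [affMap_one_zero]
      rw [heq] at h0
      exact h0
    · have hlt : k < k' := by omega
      obtain ⟨k'', rfl⟩ : ∃ k'', k' = k'' + 1 := ⟨k' - 1, by omega⟩
      rw [PiK] at hq
      have h0 := hq.2 k hlt p hp 1 (by simp) 0
      have heq : (fun x => q x * p (affMap m 1 0 x) * f x) =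
          fun x => p x * q x * f x := funext fun x => by rw [affMap_one_zero]; ring
      rw [heq] at h0
      exact h0
  · intro k p hp
    obtain ⟨P, hdegP, hpe⟩ := hp
    obtain ⟨G, hG, hPsum⟩ := (mainInduction hf k).2 P hdegP
    refine ⟨fun j => fun x => eval x (G j),
      fun j hj => ((mainInduction hf j).1 _).mpr
        ⟨G j, (hG j hj).1, fun x => rfl, (hG j hj).2⟩,
      fun x => by rw [hpe x, hPsum, _root_.map_sum], ?_⟩
    intro g' hg' hsum' j hjk
    have hch : ∀ i : ℕ, ∃ Pi : MvPolynomial (Fin m) ℝ, i ≤ k →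
        (Pi.totalDegree ≤ i ∧ (∀ x, g' i x = eval x Pi) ∧ Orth f i Pi) := by
      intro i
      by_cases hik : i ≤ k
      · obtain ⟨Pi, h1, h2, h3⟩ := ((mainInduction hf i).1 _).mp (hg' i hik)
        exact ⟨Pi, fun _ => ⟨h1, h2, h3⟩⟩
      · exact ⟨0, fun h => absurd h hik⟩
    choose P' hP' using hch
    have hsumeq : (∑ i ∈ Finset.range (k + 1), P' i) =
        ∑ i ∈ Finset.range (k + 1), G i := by
      apply MvPolynomial.funext
      intro x
      rw [_root_.map_sum, _root_.map_sum]
      calc ∑ i ∈ Finset.range (k + 1), eval x (P' i)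
          = ∑ i ∈ Finset.range (k + 1), g' i x :=
            Finset.sum_congr rfl fun i hi =>
              ((hP' i (Nat.lt_succ_iff.mp (Finset.mem_range.mp hi))).2.1 x).symm
        _ = p x := (hsum' x).symm
        _ = ∑ i ∈ Finset.range (k + 1), eval x (G i) := by
            rw [hpe x, hPsum, _root_.map_sum]
    have hcross : ∀ i ∈ Finset.range (k + 1), i ≠ j →
        BI f (P' j - G j) (P' i - G i) = 0 := by
      intro i hi hij
      have hik : i ≤ k := Nat.lt_succ_iff.mp (Finset.mem_range.mp hi)
      obtain ⟨hdi, _, hoi⟩ := hP' i hik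
      obtain ⟨hdGi, hoGi⟩ := hG i hik
      obtain ⟨hdj, _, hoj⟩ := hP' j hjk
      obtain ⟨hdGj, hoGj⟩ := hG j hjk
      rcases lt_or_gt_of_ne hij with hlt | hgt
      · have hdeg_i : (P' i - G i).totalDegree < j :=
          lt_of_le_of_lt ((totalDegree_sub _ _).trans (max_le hdi hdGi)) hlt
        rw [BI_sub_left hf, hoj _ hdeg_i, hoGj _ hdeg_i, sub_self]
      · have hdeg_d : (P' j - G j).totalDegree < i :=
          lt_of_le_of_lt ((totalDegree_sub _ _).trans (max_le hdj hdGj)) hgt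
        rw [BI_symm, BI_sub_left hf, hoi _ hdeg_d, hoGi _ hdeg_d, sub_self]
    have hzero : (∑ i ∈ Finset.range (k + 1), (P' i - G i)) = 0 := by
      rw [Finset.sum_sub_distrib, hsumeq, sub_self]
    have h1 : BI f (P' j - G j) (∑ i ∈ Finset.range (k + 1), (P' i - G i)) = 0 := by
      rw [hzero, BI_zero_right]
    rw [BI_sum_right hf,
      Finset.sum_eq_single_of_mem j (Finset.mem_range.mpr (by omega)) hcross] at h1
    have hPG : P' j = G j := sub_eq_zero.mp (posdef_BI hf _ h1)
    funext x
    rw [(hP' j hjk).2.1 x, hPG]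

end
end

section
/- Let m ≥ 1 and let f be an elliptical density on ℝ^m (with location μ, positive definite scatter V and density generator φ) such that all moments of f are finite and f is positive on a nonempty open subset of ℝ^m. Then for every k ≥ 0, the dimension of Π_k equals the binomial coefficient C(m+k−1, k). -/
open MeasureTheory Matrix Finset

noncomputable section

open MvPolynomial

set_option maxHeartbeats 1000000
set_option synthInstance.maxHeartbeats 400000


def eCons (m k : ℕ) :
    {d : Fin (m+1) →₀ ℕ // (d.sum fun _ e => e) = k} ≃
      {n : Fin m →₀ ℕ // (n.sum fun _ e => e) ≤ k} where
  toFun d := ⟨Finsupp.tail d.1, by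
    have h := d.2
    rw [Finsupp.sum_fintype _ _ (fun _ => rfl), Fin.sum_univ_succ] at h
    rw [Finsupp.sum_fintype _ _ (fun _ => rfl)]
    have htail : ∑ i : Fin m, Finsupp.tail d.1 i = ∑ i : Fin m, d.1 i.succ :=
      Finset.sum_congr rfl fun i _ => rfl
    omega⟩
  invFun t := ⟨Finsupp.cons (k - t.1.sum fun _ e => e) t.1, by
    have h : ∑ i : Fin m, t.1 i ≤ k := by
      have := t.2; rwa [Finsupp.sum_fintype _ _ (fun _ => rfl)] at this
    rw [Finsupp.sum_fintype _ _ (fun _ => rfl), Fin.sum_univ_succ]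
    simp only [Finsupp.cons_zero, Finsupp.cons_succ]
    have hs : ((t.1).sum fun _ e => e) = ∑ i : Fin m, t.1 i :=
      Finsupp.sum_fintype _ _ (fun _ => rfl)
    rw [hs]
    omega⟩
  left_inv d := by
    ext1
    have h := d.2
    rw [Finsupp.sum_fintype _ _ (fun _ => rfl), Fin.sum_univ_succ] at h
    show Finsupp.cons _ _ = d.1
    have htail : ((Finsupp.tail d.1).sum fun _ e => e) = ∑ i : Fin m, d.1 i.succ := by
      rw [Finsupp.sum_fintype _ _ (fun _ => rfl)]
      exact Finset.sum_congr rfl fun i _ => rfl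
    rw [htail]
    have hk : k - ∑ i : Fin m, d.1 i.succ = d.1 0 := by omega
    rw [hk, Finsupp.cons_tail]
  right_inv t := by
    ext1
    exact Finsupp.tail_cons _ _

def eSym (n k : ℕ) : Sym (Fin n) k ≃ {d : Fin n →₀ ℕ // (d.sum fun _ e => e) = k} where
  toFun s := ⟨Multiset.toFinsupp (s : Multiset (Fin n)),
    (Multiset.toFinsupp_sum_eq _).trans s.2⟩
  invFun d := ⟨Finsupp.toMultiset d.1, (Finsupp.card_toMultiset d.1).trans d.2⟩
  left_inv s := Subtype.ext (Multiset.toFinsupp_toMultiset _)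
  right_inv d := Subtype.ext (Finsupp.toMultiset_toFinsupp _)

theorem finrank_rtd (m k : ℕ) :
    Module.finrank ℝ (MvPolynomial.restrictTotalDegree (Fin m) ℝ k) = (m + k).choose k := by
  classical
  letI : Fintype ({n : Fin m →₀ ℕ | (n.sum fun _ e => e) ≤ k} : Set _) :=
    Fintype.ofEquiv _ ((eSym (m+1) k).trans (eCons m k))
  have hdef : MvPolynomial.restrictTotalDegree (Fin m) ℝ k =
      MvPolynomial.restrictSupport ℝ {n : Fin m →₀ ℕ | (n.sum fun _ e => e) ≤ k} := rfl
  rw [hdef, Module.finrank_eq_card_basis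
    (MvPolynomial.basisRestrictSupport ℝ {n : Fin m →₀ ℕ | (n.sum fun _ e => e) ≤ k})]
  letI : Fintype {n : Fin m →₀ ℕ // (n.sum fun _ e => e) ≤ k} :=
    Fintype.ofEquiv _ ((eSym (m+1) k).trans (eCons m k))
  have hcard : Fintype.card ↑{n : Fin m →₀ ℕ | (n.sum fun _ e => e) ≤ k} =
      Fintype.card (Sym (Fin (m+1)) k) :=
    Fintype.card_congr (((eSym (m+1) k).trans (eCons m k)).symm)
  rw [hcard, Sym.card_sym_eq_choose]
  simp



theorem totalDegree_bind₁_le {m : ℕ} (g : Fin m → MvPolynomial (Fin m) ℝ)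
    (hg : ∀ i, (g i).totalDegree ≤ 1) (q : MvPolynomial (Fin m) ℝ) :
    (bind₁ g q).totalDegree ≤ q.totalDegree := by
  conv_lhs => rw [q.as_sum, map_sum]
  refine (totalDegree_finset_sum _ _).trans (Finset.sup_le fun d hd => ?_)
  rw [bind₁_monomial]
  refine (totalDegree_mul _ _).trans ?_
  rw [totalDegree_C, zero_add]
  refine (totalDegree_finset_prod _ _).trans ?_
  refine le_trans ?_ (le_totalDegree hd)
  have : ∀ i ∈ d.support, (g i ^ d i).totalDegree ≤ d i := by
    intro i _
    refine (totalDegree_pow _ _).trans ?_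
    calc d i * (g i).totalDegree ≤ d i * 1 := Nat.mul_le_mul_left _ (hg i)
    _ = d i := Nat.mul_one _
  refine (Finset.sum_le_sum this).trans ?_
  rw [Finsupp.sum]

/-- affine substitution polynomial -/
def affPoly {m : ℕ} (A : Matrix (Fin m) (Fin m) ℝ) (b : Fin m → ℝ)
    (i : Fin m) : MvPolynomial (Fin m) ℝ :=
  ∑ j, C (A i j) * (X j + C (b j))

theorem affPoly_totalDegree {m : ℕ} (A : Matrix (Fin m) (Fin m) ℝ) (b : Fin m → ℝ) (i : Fin m) :
    (affPoly A b i).totalDegree ≤ 1 := by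
  refine (totalDegree_finset_sum _ _).trans (Finset.sup_le fun j _ => ?_)
  refine (totalDegree_mul _ _).trans ?_
  rw [totalDegree_C, zero_add]
  refine (totalDegree_add _ _).trans ?_
  simp [totalDegree_X, totalDegree_C]

theorem eval_affPoly {m : ℕ} (A : Matrix (Fin m) (Fin m) ℝ) (b : Fin m → ℝ)
    (x : Fin m → ℝ) (i : Fin m) :
    eval x (affPoly A b i) = A.mulVec (x + b) i := by
  simp [affPoly, mulVec, dotProduct]

theorem eval_bind_aff {m : ℕ} (A : Matrix (Fin m) (Fin m) ℝ) (b : Fin m → ℝ)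
    (q : MvPolynomial (Fin m) ℝ) (x : Fin m → ℝ) :
    eval x (bind₁ (affPoly A b) q) = eval (A.mulVec (x + b)) q := by
  have hae : ∀ (y : Fin m → ℝ) (p : MvPolynomial (Fin m) ℝ), eval y p = aeval (R := ℝ) y p :=
    fun y p => rfl
  have h := aeval_bind₁ (R := ℝ) (S := ℝ) x (affPoly A b) q
  rw [hae, hae, h]
  have h2 : (fun i => aeval (R := ℝ) x (affPoly A b i)) = A.mulVec (x + b) :=
    funext fun i => (hae x _).symm.trans (eval_affPoly A b x i)
  rw [h2]



variable {m : ℕ} {f : (Fin m → ℝ) → ℝ}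

theorem int_poly (hfm : Measurable f) (hf0 : ∀ x, 0 ≤ f x)
    (hmom : ∀ N : ℕ, Integrable fun x : Fin m → ℝ => ‖x‖ ^ N * f x)
    (r : MvPolynomial (Fin m) ℝ) :
    Integrable fun x : Fin m → ℝ => eval x r * f x := by
  have hg : Integrable fun x : Fin m → ℝ =>
      ∑ d ∈ r.support, |coeff d r| * (‖x‖ ^ (d.sum fun _ e => e) * f x) := by
    apply integrable_finset_sum
    intro d _
    exact (hmom _).const_mul _
  refine hg.mono' ?_ (ae_of_all _ fun x => ?_)
  · exact ((r.continuous_eval).aestronglyMeasurable.mul hfm.aestronglyMeasurable)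
  · rw [Real.norm_eq_abs, abs_mul, abs_of_nonneg (hf0 x)]
    have hbound : |eval x r| ≤ ∑ d ∈ r.support, |coeff d r| * ‖x‖ ^ (d.sum fun _ e => e) := by
      rw [eval_eq]
      refine (Finset.abs_sum_le_sum_abs _ _).trans (Finset.sum_le_sum fun d _ => ?_)
      rw [abs_mul]
      refine mul_le_mul_of_nonneg_left ?_ (abs_nonneg _)
      calc |∏ i ∈ d.support, x i ^ d i| = ∏ i ∈ d.support, |x i| ^ d i := by
            rw [Finset.abs_prod]; exact Finset.prod_congr rfl fun i _ => abs_pow _ _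
        _ ≤ ∏ i ∈ d.support, ‖x‖ ^ d i := by
            refine Finset.prod_le_prod (fun i _ => by positivity) fun i _ => ?_
            exact pow_le_pow_left₀ (abs_nonneg _) ((Real.norm_eq_abs (x i)) ▸ norm_le_pi_norm x i) _
        _ = ‖x‖ ^ (d.sum fun _ e => e) := by
            rw [Finset.prod_pow_eq_pow_sum, Finsupp.sum]
    calc |eval x r| * f x ≤ (∑ d ∈ r.support, |coeff d r| * ‖x‖ ^ (d.sum fun _ e => e)) * f x :=
          mul_le_mul_of_nonneg_right hbound (hf0 x)
      _ = ∑ d ∈ r.support, |coeff d r| * (‖x‖ ^ (d.sum fun _ e => e) * f x) := by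
          rw [Finset.sum_mul]; exact Finset.sum_congr rfl fun d _ => by ring

theorem poly_zero_of_int_sq_zero (hfm : Measurable f) (hf0 : ∀ x, 0 ≤ f x)
    (hmom : ∀ N : ℕ, Integrable fun x : Fin m → ℝ => ‖x‖ ^ N * f x)
    (U : Set (Fin m → ℝ)) (hU : IsOpen U) (hUne : U.Nonempty) (hUpos : ∀ x ∈ U, 0 < f x)
    (p : MvPolynomial (Fin m) ℝ)
    (h : (∫ x, eval x p * eval x p * f x) = 0) : p = 0 := by
  have hint : Integrable fun x : Fin m → ℝ => eval x p * eval x p * f x := by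
    have := int_poly hfm hf0 hmom (p * p)
    simpa [mul_assoc] using this
  have hnn : (0 : (Fin m → ℝ) → ℝ) ≤ fun x => eval x p * eval x p * f x :=
    fun x => mul_nonneg (mul_self_nonneg _) (hf0 x)
  have hae : (fun x => eval x p * eval x p * f x) =ᵐ[volume] 0 :=
    (integral_eq_zero_iff_of_nonneg hnn hint).mp h
  -- the set where eval p ≠ 0 within U is open and null, hence empty
  have hSopen : IsOpen (U ∩ {x | eval x p ≠ 0}) :=
    hU.inter (isOpen_ne_fun p.continuous_eval continuous_const)
  have hSnull : volume (U ∩ {x | eval x p ≠ 0}) = 0 := by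
    refine measure_mono_null ?_ hae
    intro x hx
    simp only [Set.mem_setOf_eq, Pi.zero_apply]
    intro hx0
    exact hx.2 (by
      rcases mul_eq_zero.mp hx0 with h1 | h2
      · rcases mul_eq_zero.mp h1 with h3 | h3 <;> exact h3
      · exact absurd h2 (ne_of_gt (hUpos x hx.1)))
  have hSempty : U ∩ {x | eval x p ≠ 0} = ∅ := by
    by_contra hne
    rw [← Set.not_nonempty_iff_eq_empty] at hne
    push_neg at hne
    exact (hSopen.measure_pos volume hne).ne' hSnull
  have hUzero : ∀ x ∈ U, eval x p = 0 := by
    intro x hx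
    by_contra hne
    exact Set.eq_empty_iff_forall_notMem.mp hSempty x ⟨hx, hne⟩
  -- identity theorem
  obtain ⟨x₀, hx₀⟩ := hUne
  have han : AnalyticOnNhd ℝ (fun x : Fin m → ℝ => eval x p) Set.univ :=
    AnalyticOnNhd.eval_continuousLinearMap (ContinuousLinearMap.id ℝ (Fin m → ℝ)) p
  have hev : (fun x : Fin m → ℝ => eval x p) =ᶠ[nhds x₀] 0 := by
    filter_upwards [hU.mem_nhds hx₀] with x hx
    exact hUzero x hx
  have := han.eqOn_zero_of_preconnected_of_eventuallyEq_zero isPreconnected_univ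
    (Set.mem_univ x₀) hev
  apply MvPolynomial.funext (q := 0)
  intro x
  simpa using this (Set.mem_univ x)

section LinAlg
variable {m : ℕ} (B : LinearMap.BilinForm ℝ (MvPolynomial (Fin m) ℝ))

local notation "rtd" k => MvPolynomial.restrictTotalDegree (Fin m) ℝ k

def Yk : ℕ → Submodule ℝ (MvPolynomial (Fin m) ℝ)
  | 0 => rtd 0
  | (k+1) => (rtd (k+1)) ⊓ B.orthogonal (rtd k)

theorem rtd_mono {j k : ℕ} (h : j ≤ k) : (rtd j) ≤ rtd k := by
  intro p hp
  rw [MvPolynomial.mem_restrictTotalDegree] at hp ⊢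
  exact le_trans hp h

theorem Yk_le (k : ℕ) : Yk B k ≤ rtd k := by
  cases k with
  | zero => exact le_rfl
  | succ k => exact inf_le_left

variable (hsymm : ∀ p q, B p q = B q p) (hndg : ∀ p, B p p = 0 → p = 0)

include hsymm hndg in
theorem finrank_Yk_succ (k : ℕ) :
    Module.finrank ℝ (Yk B (k+1)) = (m + k).choose (k+1) := by
  classical
  set V : Submodule ℝ (MvPolynomial (Fin m) ℝ) := rtd (k+1) with hV
  set B' := B.restrict V with hB'
  have hrefl : B'.IsRefl := by
    intro x y h
    have : B (y : MvPolynomial (Fin m) ℝ) (x : MvPolynomial (Fin m) ℝ) = 0 := by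
      rw [hsymm]; exact h
    exact this
  have hndg' : B'.Nondegenerate := by
    refine (LinearMap.IsRefl.nondegenerate_iff_separatingLeft hrefl).mpr ?_
    intro x hx
    have hBxx : B (x : MvPolynomial (Fin m) ℝ) (x : MvPolynomial (Fin m) ℝ) = 0 := hx x
    exact Subtype.ext (hndg _ hBxx)
  set W' := Submodule.comap V.subtype (rtd k) with hW'
  have h1 : Module.finrank ℝ (B'.orthogonal W') =
      Module.finrank ℝ V - Module.finrank ℝ W' :=
    LinearMap.BilinForm.finrank_orthogonal hndg' W'
  have hWle : (rtd k) ≤ V := rtd_mono (Nat.le_succ k)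
  have hW'rank : Module.finrank ℝ W' = (m + k).choose k := by
    rw [LinearEquiv.finrank_eq (Submodule.comapSubtypeEquivOfLe hWle)]
    exact finrank_rtd m k
  have hmap : Submodule.map V.subtype (B'.orthogonal W') = Yk B (k+1) := by
    ext p
    constructor
    · rintro ⟨v, hv, rfl⟩
      refine Submodule.mem_inf.mpr ⟨v.2, ?_⟩
      rw [LinearMap.BilinForm.mem_orthogonal_iff]
      intro n hn
      exact hv ⟨n, hWle hn⟩ hn
    · intro hp
      rcases Submodule.mem_inf.mp hp with ⟨hp1, hp2⟩
      refine ⟨⟨p, hp1⟩, ?_, rfl⟩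
      intro w hw
      exact (LinearMap.BilinForm.mem_orthogonal_iff.mp hp2) _ hw
  have h2 : Module.finrank ℝ (Yk B (k+1)) = Module.finrank ℝ (B'.orthogonal W') := by
    rw [← hmap]
    exact (Submodule.finrank_map_subtype_eq V _)
  rw [h2, h1, hW'rank, hV, finrank_rtd m (k+1)]
  have hp : (m + (k+1)).choose (k+1) = (m + k).choose k + (m + k).choose (k+1) :=
    Nat.choose_succ_succ (m + k) k
  omega

include hsymm hndg in
theorem rtd_sup (k : ℕ) : (rtd k) ⊔ Yk B (k+1) = rtd (k+1) := by
  haveI : FiniteDimensional ℝ (Yk B (k+1)) :=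
    Submodule.finiteDimensional_of_le (Yk_le B (k+1))
  have hle : (rtd k) ⊔ Yk B (k+1) ≤ rtd (k+1) :=
    sup_le (rtd_mono (Nat.le_succ k)) (Yk_le B (k+1))
  have hdisj : (rtd k) ⊓ Yk B (k+1) = ⊥ := by
    rw [eq_bot_iff]
    intro x hx
    rcases Submodule.mem_inf.mp hx with ⟨hx1, hx2⟩
    rcases Submodule.mem_inf.mp hx2 with ⟨-, hx3⟩
    have : B x x = 0 := (LinearMap.BilinForm.mem_orthogonal_iff.mp hx3) x hx1
    simpa using hndg x this
  have hrank : Module.finrank ℝ ((rtd k) ⊔ Yk B (k+1) : Submodule ℝ _) =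
      Module.finrank ℝ (rtd (k+1)) := by
    have := Submodule.finrank_sup_add_finrank_inf_eq (rtd k) (Yk B (k+1))
    rw [hdisj, finrank_bot, add_zero] at this
    rw [this, finrank_rtd m k, finrank_Yk_succ B hsymm hndg k, finrank_rtd m (k+1)]
    exact (Nat.choose_succ_succ (m + k) k).symm
  exact Submodule.eq_of_le_of_finrank_le hle hrank.ge

end LinAlg


/-- evaluation as a linear map into functions -/
def Em (m : ℕ) : MvPolynomial (Fin m) ℝ →ₗ[ℝ] ((Fin m → ℝ) → ℝ) where
  toFun p := fun x => eval x p
  map_add' p q := by funext x; simp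
  map_smul' c p := by funext x; simp [MvPolynomial.smul_eval]

@[simp] theorem Em_apply (m : ℕ) (p : MvPolynomial (Fin m) ℝ) (x : Fin m → ℝ) :
    Em m p x = eval x p := rfl

theorem Em_inj (m : ℕ) : Function.Injective (Em m) := fun p q h =>
  MvPolynomial.funext fun x => congrFun h x

theorem PkSet_eq_image (m k : ℕ) :
    PkSet m k = Em m '' (MvPolynomial.restrictTotalDegree (Fin m) ℝ k : Set _) := by
  ext g
  constructor
  · rintro ⟨p, hdeg, hval⟩
    exact ⟨p, (MvPolynomial.mem_restrictTotalDegree _ _ _).mpr hdeg, (funext hval).symm⟩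
  · rintro ⟨p, hp, rfl⟩
    exact ⟨p, (MvPolynomial.mem_restrictTotalDegree _ _ _).mp hp, fun x => rfl⟩

section Main

variable {m : ℕ} {f : (Fin m → ℝ) → ℝ}

/-- the bilinear form ∫ p q f -/
def Bf (f : (Fin m → ℝ) → ℝ)
    (hint : ∀ r : MvPolynomial (Fin m) ℝ, Integrable fun x => eval x r * f x) :
    LinearMap.BilinForm ℝ (MvPolynomial (Fin m) ℝ) :=
  LinearMap.mk₂ ℝ (fun p q => ∫ x, eval x p * eval x q * f x)
    (fun p p' q => by
      have h1 : Integrable fun x => eval x p * eval x q * f x := by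
        simpa only [_root_.map_mul, mul_assoc] using hint (p * q)
      have h2 : Integrable fun x => eval x p' * eval x q * f x := by
        simpa only [_root_.map_mul, mul_assoc] using hint (p' * q)
      rw [← integral_add h1 h2]
      congr 1; funext x; simp [add_mul])
    (fun c p q => by
      rw [← integral_smul]
      congr 1; funext x; simp [MvPolynomial.smul_eval]; ring)
    (fun p q q' => by
      have h1 : Integrable fun x => eval x p * eval x q * f x := by
        simpa only [_root_.map_mul, mul_assoc] using hint (p * q)
      have h2 : Integrable fun x => eval x p * eval x q' * f x := by
        simpa only [_root_.map_mul, mul_assoc] using hint (p * q')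
      rw [← integral_add h1 h2]
      congr 1; funext x; simp [mul_add]; ring)
    (fun c p q => by
      rw [← integral_smul]
      congr 1; funext x; simp [MvPolynomial.smul_eval]; ring)

variable (hint : ∀ r : MvPolynomial (Fin m) ℝ, Integrable fun x => eval x r * f x)

@[simp] theorem Bf_apply (p q : MvPolynomial (Fin m) ℝ) :
    Bf f hint p q = ∫ x, eval x p * eval x q * f x := rfl

theorem Bf_symm (p q : MvPolynomial (Fin m) ℝ) : Bf f hint p q = Bf f hint q p := by
  simp only [Bf_apply]
  congr 1; funext x; ring

theorem integral_affMap_eq (p q : MvPolynomial (Fin m) ℝ)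
    (A : Matrix (Fin m) (Fin m) ℝ) (b : Fin m → ℝ) :
    (∫ x, Em m p x * Em m q (affMap m A b x) * f x) =
      Bf f hint (bind₁ (affPoly A b) q) p := by
  rw [Bf_apply]
  congr 1; funext x
  rw [Em_apply, Em_apply, show affMap m A b x = A.mulVec (x + b) from rfl, ← eval_bind_aff]
  ring

theorem integral_id_eq (p q : MvPolynomial (Fin m) ℝ) :
    (∫ x, Em m p x * Em m q (affMap m 1 0 x) * f x) = Bf f hint q p := by
  rw [Bf_apply]
  congr 1; funext x
  rw [Em_apply, Em_apply, show affMap m 1 0 x = x from by simp [affMap, Matrix.one_mulVec]]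
  ring

variable (hndg : ∀ p : MvPolynomial (Fin m) ℝ, Bf f hint p p = 0 → p = 0)

include hndg in
theorem PiK_eq : ∀ k : ℕ, PiK m f k = Em m '' ↑(Yk (Bf f hint) k) := by
  intro k
  induction k using Nat.strong_induction_on with
  | _ k ih =>
    match k with
    | 0 =>
      rw [PiK]
      exact PkSet_eq_image m 0
    | (k+1) =>
      have hBs := Bf_symm (f := f) hint
      rw [PiK]
      ext g
      constructor
      · rintro ⟨hgP, hgcond⟩
        rw [PkSet_eq_image] at hgP
        obtain ⟨p₀, hp₀, rfl⟩ := hgP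
        have key : ∀ j, j ≤ k → ∀ q ∈ MvPolynomial.restrictTotalDegree (Fin m) ℝ j,
            Bf f hint q p₀ = 0 := by
          intro j
          induction j with
          | zero =>
            intro _ q hq
            have hq0 : Em m q ∈ PiK m f 0 := by
              rw [ih 0 (Nat.succ_pos _)]
              exact ⟨q, hq, rfl⟩
            have hc := hgcond 0 (Nat.succ_pos _) (Em m q) hq0 1 (by simp) 0
            rwa [integral_id_eq hint p₀ q] at hc
          | succ j ihj =>
            intro hj q hq
            rw [← rtd_sup (Bf f hint) hBs hndg j] at hq
            obtain ⟨a, ha, c, hc, rfl⟩ := Submodule.mem_sup.mp hq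
            have hA : Bf f hint a p₀ = 0 := ihj (le_of_lt hj) a ha
            have hC : Bf f hint c p₀ = 0 := by
              have hcPi : Em m c ∈ PiK m f (j+1) := by
                rw [ih (j+1) (by omega)]
                exact ⟨c, hc, rfl⟩
              have hcc := hgcond (j+1) (by omega) (Em m c) hcPi 1 (by simp) 0
              rwa [integral_id_eq hint p₀ c] at hcc
            rw [map_add, LinearMap.add_apply, hA, hC, add_zero]
        refine ⟨p₀, Submodule.mem_inf.mpr ⟨hp₀, ?_⟩, rfl⟩
        rw [LinearMap.BilinForm.mem_orthogonal_iff]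
        intro n hn
        exact key k le_rfl n hn
      · rintro ⟨p', hp', rfl⟩
        rcases Submodule.mem_inf.mp hp' with ⟨hdeg, horth⟩
        refine ⟨?_, ?_⟩
        · rw [PkSet_eq_image]
          exact ⟨p', hdeg, rfl⟩
        · intro k' hk' q hq A hA b
          rw [ih k' hk'] at hq
          obtain ⟨q', hq', rfl⟩ := hq
          have hq'' : bind₁ (affPoly A b) q' ∈ MvPolynomial.restrictTotalDegree (Fin m) ℝ k := by
            rw [MvPolynomial.mem_restrictTotalDegree]
            refine le_trans (totalDegree_bind₁_le _ (affPoly_totalDegree A b) q') ?_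
            have := (MvPolynomial.mem_restrictTotalDegree _ _ _).mp (Yk_le _ k' hq')
            omega
          rw [integral_affMap_eq hint p' q' A b]
          exact (LinearMap.BilinForm.mem_orthogonal_iff.mp horth) _ hq''

end Main

/-- For every `k ≥ 0`, the dimension of `Π_k` equals the binomial
coefficient `C(m + k − 1, k)`. (Since `Π_k` is a linear subspace, its span coincides
with it, so the dimension of `Π_k` is the rank of the span of `Π_k`.) -/
theorem statement4 (m : ℕ) (hm : 1 ≤ m) (f : (Fin m → ℝ) → ℝ)
    (hf : IsNiceElliptical m f) (k : ℕ) :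
    Module.finrank ℝ (Submodule.span ℝ (PiK m f k)) = (m + k - 1).choose k := by
  classical
  obtain ⟨⟨μ, V, φ, hV, hφm, hφ0, hφint, hφpos, hfeq⟩, hmom, U, hUo, hUne, hUpos⟩ := hf
  have hfm : Measurable f := by
    rw [hfeq]
    have hme : Measurable fun x : Fin m → ℝ =>
        (cm m φ * Real.sqrt (V⁻¹).det) *
          φ (dotProduct (x - μ) ((V⁻¹).mulVec (x - μ))) := by
      apply Measurable.const_mul
      apply hφm.comp
      have hc : Continuous fun x : Fin m → ℝ =>
          dotProduct (x - μ) ((V⁻¹).mulVec (x - μ)) := by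
        simp only [dotProduct, Matrix.mulVec]
        fun_prop
      exact hc.measurable
    have h2 : ellDensity m φ μ V = fun x : Fin m → ℝ =>
        (cm m φ * Real.sqrt (V⁻¹).det) *
          φ (dotProduct (x - μ) ((V⁻¹).mulVec (x - μ))) := by
      funext x
      simp [ellDensity, mul_assoc]
    rw [h2]
    exact hme
  have hcm : 0 ≤ cm m φ := by
    apply div_nonneg
    · refine (Real.Gamma_pos_of_pos ?_).le
      have : (0 : ℝ) < (m : ℝ) := by exact_mod_cast hm
      linarith
    · exact mul_nonneg (Real.rpow_nonneg Real.pi_pos.le _) hφpos.le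
  have hf0 : ∀ x, 0 ≤ f x := by
    intro x
    rw [hfeq]
    exact mul_nonneg (mul_nonneg hcm (Real.sqrt_nonneg _)) (hφ0 _)
  have hint : ∀ r : MvPolynomial (Fin m) ℝ,
      Integrable fun x => MvPolynomial.eval x r * f x := int_poly hfm hf0 hmom
  have hndg : ∀ p : MvPolynomial (Fin m) ℝ, Bf f hint p p = 0 → p = 0 := fun p h =>
    poly_zero_of_int_sq_zero hfm hf0 hmom U hUo hUne hUpos p h
  have hBs := Bf_symm (f := f) hint
  rw [PiK_eq hint hndg k, Submodule.span_image, Submodule.span_eq,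
    ← LinearEquiv.finrank_eq (Submodule.equivMapOfInjective (Em m) (Em_inj m) (Yk (Bf f hint) k))]
  cases k with
  | zero =>
    rw [show Yk (Bf f hint) 0 = MvPolynomial.restrictTotalDegree (Fin m) ℝ 0 from rfl,
      finrank_rtd m 0]
    simp
  | succ k =>
    rw [finrank_Yk_succ (Bf f hint) hBs hndg k]
    congr 1

end
end

section
/- Let n ≥ 1 and let Y_1, …, Y_n ∈ ℝ² be nonzero vectors with ∑_{i=1}^n Y_i = 0 and ∑_{i=1}^n Y_i Y_iᵀ = n·I_2. Write R_i = ‖Y_i‖ and U_i = Y_i/R_i = (u_{i1}, u_{i2}). Define π̄_1 = n⁻¹∑_i R_i³ u_{i1}(3 − 4u_{i1}²)/(2√6), π̄_2 = n⁻¹∑_i R_i³ u_{i2}(1 − 4u_{i1}²)/(2√6), π̄_3 = n⁻¹∑_i R_i(R_i² − 4)u_{i1}/(2√2), π̄_4 = n⁻¹∑_i R_i(R_i² − 4)u_{i2}/(2√2), and Mardia's bivariate skewness b_1 = n⁻²∑_{i=1}^n∑_{i'=1}^n (Y_iᵀY_{i'})³. Then π̄_1² + π̄_2² + π̄_3² +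 π̄_4² = b_1/6; equivalently, the smooth test statistic Q_3 = n(π̄_1² + π̄_2² + π̄_3² + π̄_4²) equals n·b_{1,2}/6. -/
open Matrix Finset

noncomputable section

/-- For standardized bivariate data (`∑ Y_i = 0`, `∑ Y_iY_iᵀ = n I₂`),
the degree-3 smooth test statistic equals Mardia's bivariate skewness statistic:
`π̄₁² + π̄₂² + π̄₃² + π̄₄² = b₁/6`, where `b₁ = n⁻² ∑_i ∑_{i'} (Y_iᵀY_{i'})³`. -/
theorem statement17 (n : ℕ) (hn : 1 ≤ n)
    (Y : Fin n → Fin 2 → ℝ) (hY0 : ∀ i, Y i ≠ 0)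
    (hmean : ∑ i, Y i = 0)
    (hcov : ∑ i, Matrix.vecMulVec (Y i) (Y i) =
      (n : ℝ) • (1 : Matrix (Fin 2) (Fin 2) ℝ))
    (R : Fin n → ℝ) (hR : ∀ i, R i = Real.sqrt (Y i 0 ^ 2 + Y i 1 ^ 2))
    (u : Fin n → Fin 2 → ℝ) (hu : ∀ i a, u i a = Y i a / R i)
    (π₁ π₂ π₃ π₄ : ℝ)
    (hπ₁ : π₁ = (n : ℝ)⁻¹ *
      ∑ i, R i ^ 3 * u i 0 * (3 - 4 * u i 0 ^ 2) / (2 * Real.sqrt 6))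
    (hπ₂ : π₂ = (n : ℝ)⁻¹ *
      ∑ i, R i ^ 3 * u i 1 * (1 - 4 * u i 0 ^ 2) / (2 * Real.sqrt 6))
    (hπ₃ : π₃ = (n : ℝ)⁻¹ *
      ∑ i, R i * (R i ^ 2 - 4) * u i 0 / (2 * Real.sqrt 2))
    (hπ₄ : π₄ = (n : ℝ)⁻¹ *
      ∑ i, R i * (R i ^ 2 - 4) * u i 1 / (2 * Real.sqrt 2))
    (b₁ : ℝ)
    (hb₁ : b₁ = ((n : ℝ) ^ 2)⁻¹ *
      ∑ i, ∑ i', dotProduct (Y i) (Y i') ^ 3) :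
    π₁ ^ 2 + π₂ ^ 2 + π₃ ^ 2 + π₄ ^ 2 = b₁ / 6 := by
  -- R i is nonzero, and R i ^ 2 = ‖Y i‖²
  have hRne : ∀ i, R i ≠ 0 := by
    intro i
    have hpos : 0 < Y i 0 ^ 2 + Y i 1 ^ 2 := by
      by_contra h
      push_neg at h
      have h0 : Y i 0 = 0 ∧ Y i 1 = 0 := by
        constructor <;> nlinarith [sq_nonneg (Y i 0), sq_nonneg (Y i 1)]
      apply hY0 i
      funext a
      fin_cases a <;> simp [h0.1, h0.2]
    rw [hR]
    positivity
  have hR2 : ∀ i, R i ^ 2 = Y i 0 ^ 2 + Y i 1 ^ 2 := by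
    intro i; rw [hR, Real.sq_sqrt]; positivity
  -- mean hypotheses componentwise
  have hx0 : ∑ i, Y i 0 = 0 := by
    have := congrFun hmean 0; simpa using this
  have hy0 : ∑ i, Y i 1 = 0 := by
    have := congrFun hmean 1; simpa using this
  -- the four per-observation polynomial identities
  have h1 : ∀ i, R i ^ 3 * u i 0 * (3 - 4 * u i 0 ^ 2)
      = 3 * Y i 0 * Y i 1 ^ 2 - Y i 0 ^ 3 := by
    intro i
    have hne := hRne i
    have h2 := hR2 i
    rw [hu]
    field_simp
    linear_combination (3 * Y i 0) * h2
  have h2' : ∀ i, R i ^ 3 * u i 1 * (1 - 4 * u i 0 ^ 2)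
      = Y i 1 ^ 3 - 3 * Y i 0 ^ 2 * Y i 1 := by
    intro i
    have hne := hRne i
    have h2 := hR2 i
    rw [hu, hu]
    field_simp
    linear_combination (Y i 1) * h2
  have h3' : ∀ i, R i * (R i ^ 2 - 4) * u i 0
      = Y i 0 ^ 3 + Y i 0 * Y i 1 ^ 2 - 4 * Y i 0 := by
    intro i
    have hne := hRne i
    have h2 := hR2 i
    rw [hu]
    field_simp
    linear_combination (Y i 0) * h2
  have h4' : ∀ i, R i * (R i ^ 2 - 4) * u i 1
      = Y i 1 ^ 3 + Y i 0 ^ 2 * Y i 1 - 4 * Y i 1 := by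
    intro i
    have hne := hRne i
    have h2 := hR2 i
    rw [hu]
    field_simp
    linear_combination (Y i 1) * h2
  -- the four moment sums
  set A := ∑ i, Y i 0 ^ 3 with hA
  set B := ∑ i, Y i 0 ^ 2 * Y i 1 with hB
  set C := ∑ i, Y i 0 * Y i 1 ^ 2 with hC
  set D := ∑ i, Y i 1 ^ 3 with hD
  -- rewrite each π in terms of A, B, C, D
  have s1 : π₁ = (n : ℝ)⁻¹ * ((3 * C - A) / (2 * Real.sqrt 6)) := by
    rw [hπ₁]
    congr 1
    rw [← Finset.sum_div]
    congr 1
    calc ∑ i, R i ^ 3 * u i 0 * (3 - 4 * u i 0 ^ 2)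
        = ∑ i, (3 * Y i 0 * Y i 1 ^ 2 - Y i 0 ^ 3) :=
          Finset.sum_congr rfl fun i _ => h1 i
      _ = 3 * C - A := by
          rw [hC, hA, Finset.sum_sub_distrib, Finset.mul_sum]
          congr 1
          exact Finset.sum_congr rfl fun i _ => by ring
  have s2 : π₂ = (n : ℝ)⁻¹ * ((D - 3 * B) / (2 * Real.sqrt 6)) := by
    rw [hπ₂]
    congr 1
    rw [← Finset.sum_div]
    congr 1
    calc ∑ i, R i ^ 3 * u i 1 * (1 - 4 * u i 0 ^ 2)
        = ∑ i, (Y i 1 ^ 3 - 3 * Y i 0 ^ 2 * Y i 1) :=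
          Finset.sum_congr rfl fun i _ => h2' i
      _ = D - 3 * B := by
          rw [hD, hB, Finset.sum_sub_distrib, Finset.mul_sum]
          congr 1
          exact Finset.sum_congr rfl fun i _ => by ring
  have s3 : π₃ = (n : ℝ)⁻¹ * ((A + C) / (2 * Real.sqrt 2)) := by
    rw [hπ₃]
    congr 1
    rw [← Finset.sum_div]
    congr 1
    calc ∑ i, R i * (R i ^ 2 - 4) * u i 0
        = ∑ i, (Y i 0 ^ 3 + Y i 0 * Y i 1 ^ 2 - 4 * Y i 0) :=
          Finset.sum_congr rfl fun i _ => h3' i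
      _ = A + C - 4 * (∑ i, Y i 0) := by
          rw [hA, hC, Finset.sum_sub_distrib, Finset.sum_add_distrib, Finset.mul_sum]
      _ = A + C := by rw [hx0]; ring
  have s4 : π₄ = (n : ℝ)⁻¹ * ((B + D) / (2 * Real.sqrt 2)) := by
    rw [hπ₄]
    congr 1
    rw [← Finset.sum_div]
    congr 1
    calc ∑ i, R i * (R i ^ 2 - 4) * u i 1
        = ∑ i, (Y i 1 ^ 3 + Y i 0 ^ 2 * Y i 1 - 4 * Y i 1) :=
          Finset.sum_congr rfl fun i _ => h4' i
      _ = D + B - 4 * (∑ i, Y i 1) := by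
          rw [hD, hB, Finset.sum_sub_distrib, Finset.sum_add_distrib, Finset.mul_sum]
      _ = B + D := by rw [hy0]; ring
  -- expand Mardia's skewness
  have inner : ∀ i, ∑ j, dotProduct (Y i) (Y j) ^ 3
      = Y i 0 ^ 3 * A + Y i 0 ^ 2 * Y i 1 * B * 3 + Y i 0 * Y i 1 ^ 2 * C * 3
        + Y i 1 ^ 3 * D := by
    intro i
    rw [hA, hB, hC, hD]
    simp only [dotProduct, Fin.sum_univ_two, Finset.mul_sum, Finset.sum_mul,
      ← Finset.sum_add_distrib]
    exact Finset.sum_congr rfl fun j _ => by ring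
  have key : b₁ = ((n : ℝ) ^ 2)⁻¹ * (A ^ 2 + 3 * B ^ 2 + 3 * C ^ 2 + D ^ 2) := by
    rw [hb₁]
    congr 1
    rw [Finset.sum_congr rfl fun i _ => inner i]
    simp only [Finset.sum_add_distrib, ← Finset.sum_mul, ← hA, ← hB, ← hC, ← hD]
    ring
  -- final algebra
  have h6 : Real.sqrt 6 ^ 2 = 6 := Real.sq_sqrt (by norm_num)
  have h2 : Real.sqrt 2 ^ 2 = 2 := Real.sq_sqrt (by norm_num)
  have e1 : π₁ ^ 2 = ((n : ℝ) ^ 2)⁻¹ * ((3 * C - A) ^ 2 / 24) := by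
    rw [s1, mul_pow, div_pow, mul_pow, h6]; ring
  have e2 : π₂ ^ 2 = ((n : ℝ) ^ 2)⁻¹ * ((D - 3 * B) ^ 2 / 24) := by
    rw [s2, mul_pow, div_pow, mul_pow, h6]; ring
  have e3 : π₃ ^ 2 = ((n : ℝ) ^ 2)⁻¹ * ((A + C) ^ 2 / 8) := by
    rw [s3, mul_pow, div_pow, mul_pow, h2]; ring
  have e4 : π₄ ^ 2 = ((n : ℝ) ^ 2)⁻¹ * ((B + D) ^ 2 / 8) := by
    rw [s4, mul_pow, div_pow, mul_pow, h2]; ring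
  rw [e1, e2, e3, e4, key]; ring

end
end
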